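/- First localization lemma: Let λ be a probability measure on a measurable space X, let (X_i)_{i ∈ I} be a finite measurable partition of X with λ(X_i) > 0 for every i ∈ I, let h : X → ℝ be a measurable function, and let σ > 0. Then ((λ ⊗ λ){(x, x') ∈ X × X : |h(x) − h(x')| ≤ σ})² ≤ Σ_{i ∈ I} (1 / λ(X_i)) · (λ ⊗ λ){(x, x̃) ∈ X_i × X_i : |h(x) − h(x̃)| ≤ 2σ}. -/

import Mathlib

open MeasureTheory

/-- First localization lemma: for a probability measure `μ` on `X`, a finite measurable
partition `(A i)` of `X` with positive masses, a measurable `h : X → ℝ` and `σ > 0`,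
`((μ ⊗ μ){|h x - h x'| ≤ σ})² ≤ ∑ i, (μ (A i))⁻¹ · (μ ⊗ μ){(x, x̃) ∈ A i × A i, |h x - h x̃| ≤ 2σ}`. -/
theorem stmt_2 {X : Type*} [MeasurableSpace X] (μ : Measure X) [IsProbabilityMeasure μ]
    {I : Type*} [Fintype I] (A : I → Set X)
    (hmeas : ∀ i, MeasurableSet (A i))
    (hdisj : Pairwise (Function.onFun Disjoint A))
    (hcover : (⋃ i, A i) = Set.univ)
    (hpos : ∀ i, 0 < μ (A i))
    (h : X → ℝ) (hh : Measurable h) (σ : ℝ) (hσ : 0 < σ) :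
    ((μ.prod μ) {p : X × X | |h p.1 - h p.2| ≤ σ}) ^ 2 ≤
      ∑ i : I, (μ (A i))⁻¹ *
        (μ.prod μ) ((A i ×ˢ A i) ∩ {p : X × X | |h p.1 - h p.2| ≤ 2 * σ}) := by
  classical
  set S : Set (X × X) := {p : X × X | |h p.1 - h p.2| ≤ σ} with hSdef
  have habs : Measurable fun p : X × X => |h p.1 - h p.2| :=
    ((hh.comp measurable_fst).sub (hh.comp measurable_snd)).abs
  have hSm : MeasurableSet S := habs measurableSet_Iic
  set T : I → Set (X × X) :=
    fun i => (A i ×ˢ A i) ∩ {p : X × X | |h p.1 - h p.2| ≤ 2 * σ} with hTdef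
  set B : I → Set (X × X) := fun i => (A i ×ˢ (Set.univ : Set X)) ∩ S with hBdef
  have hBm : ∀ i, MeasurableSet (B i) :=
    fun i => ((hmeas i).prod MeasurableSet.univ).inter hSm
  -- Step 1 : decompose `S` along the partition in the first coordinate
  have hUnion : ⋃ i, B i = S := by
    simp only [hBdef, ← Set.iUnion_inter, ← Set.iUnion_prod_const, hcover,
      Set.univ_prod_univ, Set.univ_inter]
  have hBdisj : Pairwise (Function.onFun Disjoint B) := by
    intro i j hij
    refine Set.disjoint_left.2 ?_
    rintro ⟨x, y⟩ ⟨⟨hxi, -⟩, -⟩ ⟨⟨hxj, -⟩, -⟩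
    exact Set.disjoint_left.1 (hdisj hij) hxi hxj
  have hsplit : μ.prod μ S = ∑ i, μ.prod μ (B i) := by
    rw [← hUnion, measure_iUnion hBdisj hBm, tsum_fintype]
  -- Step 3 : key estimate `(μ.prod μ (B i))^2 ≤ μ.prod μ (T i)`
  have key : ∀ i, μ.prod μ (B i) ^ 2 ≤ μ.prod μ (T i) := by
    intro i
    set C := μ.prod μ (T i) with hCdef
    have hfy : ∀ y : X, μ (A i ∩ {x | |h x - h y| ≤ σ}) ≤ C ^ (1/2 : ℝ) := by
      intro y
      set E := A i ∩ {x | |h x - h y| ≤ σ} with hEdef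
      have hEE : E ×ˢ E ⊆ T i := by
        rintro ⟨x, x'⟩ ⟨⟨hx1, hx2⟩, hx1', hx2'⟩
        refine ⟨⟨hx1, hx1'⟩, ?_⟩
        simp only [Set.mem_setOf_eq] at hx2 hx2' ⊢
        calc |h x - h x'| ≤ |h x - h y| + |h y - h x'| := abs_sub_le _ _ _
          _ ≤ σ + σ := add_le_add hx2 (by rwa [abs_sub_comm])
          _ = 2 * σ := by ring
      have h2 : μ E ^ (2 : ℝ) ≤ C := by
        rw [show (2 : ℝ) = ((2 : ℕ) : ℝ) by norm_num, ENNReal.rpow_natCast, sq,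
          ← Measure.prod_prod]
        exact measure_mono hEE
      calc μ E = (μ E ^ (2 : ℝ)) ^ (1/2 : ℝ) := by
            rw [← ENNReal.rpow_mul]; norm_num
        _ ≤ C ^ (1/2 : ℝ) := ENNReal.rpow_le_rpow h2 (by norm_num)
    have hp : μ.prod μ (B i) ≤ C ^ (1/2 : ℝ) := by
      rw [Measure.prod_apply_symm (hBm i)]
      calc ∫⁻ y, μ ((fun x => (x, y)) ⁻¹' B i) ∂μ
          ≤ ∫⁻ _, C ^ (1/2 : ℝ) ∂μ := by
            refine lintegral_mono fun y => ?_
            have hpre : (fun x => (x, y)) ⁻¹' B i = A i ∩ {x | |h x - h y| ≤ σ} := by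
              ext x
              simp only [hBdef, hSdef, Set.mem_preimage, Set.mem_inter_iff,
                Set.mem_prod, Set.mem_univ, and_true, Set.mem_setOf_eq]
            rw [hpre]; exact hfy y
        _ = C ^ (1/2 : ℝ) := by simp
    calc μ.prod μ (B i) ^ 2 ≤ (C ^ (1/2 : ℝ)) ^ 2 :=
          pow_le_pow_left₀ zero_le hp 2
      _ = C := by
          rw [← ENNReal.rpow_natCast (C ^ (1/2 : ℝ)) 2, ← ENNReal.rpow_mul]
          norm_num
  -- Step 2 : Cauchy–Schwarz (Sedrakyan) over the finite sum
  have hw0 : ∀ i, μ (A i) ≠ 0 := fun i => (hpos i).ne'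
  have hwt : ∀ i, μ (A i) ≠ ⊤ := fun i => (measure_lt_top μ (A i)).ne
  have hpt : ∀ i, μ.prod μ (B i) ≠ ⊤ := fun i => (measure_lt_top _ _).ne
  have hwsum : ∑ i, μ (A i) = 1 := by
    rw [← tsum_fintype (L := SummationFilter.unconditional I), ← measure_iUnion hdisj hmeas, hcover, measure_univ]
  have CS : (∑ i, μ.prod μ (B i)) ^ 2 ≤ ∑ i, (μ (A i))⁻¹ * μ.prod μ (B i) ^ 2 := by
    have hrhs_ne : (∑ i, (μ (A i))⁻¹ * μ.prod μ (B i) ^ 2) ≠ ⊤ := by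
      refine (ENNReal.sum_lt_top.2 fun i _ => ?_).ne
      exact (ENNReal.mul_ne_top (ENNReal.inv_lt_top.2 (hpos i)).ne
        (ENNReal.pow_ne_top (hpt i))).lt_top
    have hlhs_ne : (∑ i, μ.prod μ (B i)) ^ 2 ≠ ⊤ := by
      exact ENNReal.pow_ne_top (ENNReal.sum_lt_top.2 fun i _ => (hpt i).lt_top).ne
    rw [← ENNReal.toReal_le_toReal hlhs_ne hrhs_ne]
    have hreal : ((∑ i, μ.prod μ (B i)) ^ 2).toReal
        = (∑ i, (μ.prod μ (B i)).toReal) ^ 2 := by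
      rw [ENNReal.toReal_pow, ENNReal.toReal_sum (fun i _ => hpt i)]
    have hreal2 : (∑ i, (μ (A i))⁻¹ * μ.prod μ (B i) ^ 2).toReal
        = ∑ i, (μ.prod μ (B i)).toReal ^ 2 / (μ (A i)).toReal := by
      rw [ENNReal.toReal_sum]
      · refine Finset.sum_congr rfl fun i _ => ?_
        rw [ENNReal.toReal_mul, ENNReal.toReal_inv, ENNReal.toReal_pow,
          inv_mul_eq_div]
      · intro i _
        exact ENNReal.mul_ne_top (ENNReal.inv_lt_top.2 (hpos i)).ne
          (ENNReal.pow_ne_top (hpt i))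
    rw [hreal, hreal2]
    have hW : ∑ i, (μ (A i)).toReal = 1 := by
      rw [← ENNReal.toReal_sum (fun i _ => hwt i), hwsum, ENNReal.toReal_one]
    have := Finset.sq_sum_div_le_sum_sq_div Finset.univ
      (fun i => (μ.prod μ (B i)).toReal) (g := fun i => (μ (A i)).toReal)
      (fun i _ => ENNReal.toReal_pos (hw0 i) (hwt i))
    rwa [hW, div_one] at this
  calc (μ.prod μ S) ^ 2 = (∑ i, μ.prod μ (B i)) ^ 2 := by rw [hsplit]
    _ ≤ ∑ i, (μ (A i))⁻¹ * μ.prod μ (B i) ^ 2 := CS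
    _ ≤ ∑ i, (μ (A i))⁻¹ * μ.prod μ (T i) :=
        Finset.sum_le_sum fun i _ => mul_le_mul_right (key i) _
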